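/- Let κ > 0, q₀ ∈ ℝ, ν₀ < 1. The solution of q' = −q² − κν, ν' = q(1−ν) with q(0)=q₀, ν(0)=ν₀ remains bounded for all t ≥ 0 if and only if |q₀| < √(κ(1 − 2ν₀)). -/

import Mathlib

set_option maxHeartbeats 1000000

/-- Sharp critical threshold: the solution of `q' = −q² − κν`, `ν' = q(1−ν)` with
`ν₀ < 1` remains bounded for all `t ≥ 0` iff `|q₀| < √(κ(1 − 2ν₀))`. -/
theorem stmt_7 (κ q₀ ν₀ : ℝ) (hκ : 0 < κ) (hν₀ : ν₀ < 1) (q ν : ℝ → ℝ)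
    (hq : ∀ t ≥ (0:ℝ), HasDerivAt q (-(q t)^2 - κ * ν t) t)
    (hν : ∀ t ≥ (0:ℝ), HasDerivAt ν (q t * (1 - ν t)) t)
    (hq0 : q 0 = q₀) (hν0 : ν 0 = ν₀) :
    (∃ M : ℝ, ∀ t ≥ (0:ℝ), |q t| ≤ M ∧ |ν t| ≤ M) ↔
      |q₀| < Real.sqrt (κ * (1 - 2 * ν₀)) := by
  have hd0 : (0:ℝ) < 1 - ν₀ := by linarith
  -- constancy helper
  have const_of : ∀ f : ℝ → ℝ, (∀ s ≥ (0:ℝ), HasDerivAt f 0 s) → ∀ t ≥ (0:ℝ), f t = f 0 := by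
    intro f hf t ht
    exact constant_of_has_deriv_right_zero (f := f) (a := 0) (b := t)
      (fun x hx => ((hf x hx.1).continuousAt.continuousWithinAt))
      (fun x hx => (hf x hx.1).hasDerivWithinAt) t ⟨ht, le_refl t⟩
  -- modified q, continuous everywhere
  set qt : ℝ → ℝ := fun s => q (max s 0) with hqt_def
  have hqt_cont : Continuous qt := by
    rw [continuous_iff_continuousAt]
    intro x
    have h2 : Continuous (fun s : ℝ => max s 0) := continuous_id.max continuous_const
    have h3 : ContinuousAt (q ∘ fun s : ℝ => max s 0) x :=
      ContinuousAt.comp ((hq _ (le_max_right x 0)).continuousAt) h2.continuousAt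
    exact h3
  have hqt_eq : ∀ s ≥ (0:ℝ), qt s = q s := by
    intro s hs; simp [hqt_def, max_eq_left hs]
  set Q : ℝ → ℝ := fun t => ∫ s in (0:ℝ)..t, qt s with hQ_def
  have hQd : ∀ t : ℝ, HasDerivAt Q (qt t) t := fun t =>
    intervalIntegral.integral_hasDerivAt_right (hqt_cont.intervalIntegrable _ _)
      (hqt_cont.stronglyMeasurableAtFilter _ _) hqt_cont.continuousAt
  -- positivity of 1 - ν
  have hgpos : ∀ t ≥ (0:ℝ), 0 < 1 - ν t := by
    have hconst : ∀ t ≥ (0:ℝ), (1 - ν t) * Real.exp (Q t) = 1 - ν₀ := by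
      intro t ht
      have hcc := const_of (fun t => (1 - ν t) * Real.exp (Q t)) ?_ t ht
      · simp only [hQ_def] at hcc
        simpa [hν0] using hcc
      · intro s hs
        have h1 : HasDerivAt (fun x => 1 - ν x) (-(q s * (1 - ν s))) s := (hν s hs).const_sub 1
        have h2 : HasDerivAt (fun x => Real.exp (Q x)) (Real.exp (Q s) * qt s) s := (hQd s).exp
        have h3 := h1.mul h2
        refine h3.congr_deriv ?_
        rw [hqt_eq s hs]; ring
    intro t ht
    have h1 := hconst t ht
    nlinarith [Real.exp_pos (Q t)]
  -- substitution
  set v : ℝ → ℝ := fun t => (1 - ν t)⁻¹ with hv_def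
  set w : ℝ → ℝ := fun t => q t * v t with hw_def
  have hvpos : ∀ t ≥ (0:ℝ), 0 < v t := fun t ht => inv_pos.mpr (hgpos t ht)
  have hvd : ∀ t ≥ (0:ℝ), HasDerivAt v (w t) t := by
    intro t ht
    have hne := (hgpos t ht).ne'
    have h1 : HasDerivAt (fun x => 1 - ν x) (-(q t * (1 - ν t))) t := (hν t ht).const_sub 1
    have h2 := h1.inv hne
    refine h2.congr_deriv ?_
    simp only [hw_def, hv_def]
    field_simp
  have hwd : ∀ t ≥ (0:ℝ), HasDerivAt w (κ * (1 - v t)) t := by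
    intro t ht
    have hne := (hgpos t ht).ne'
    have h1 := (hq t ht).mul (hvd t ht)
    refine h1.congr_deriv ?_
    simp only [hw_def, hv_def]
    field_simp
    ring
  -- explicit solution
  set ω := Real.sqrt κ with hω_def
  have hω : 0 < ω := Real.sqrt_pos.mpr hκ
  have hω2 : ω ^ 2 = κ := Real.sq_sqrt hκ.le
  set A := v 0 - 1 with hA_def
  set B := w 0 / ω with hB_def
  set V : ℝ → ℝ := fun t => 1 + A * Real.cos (ω * t) + B * Real.sin (ω * t) with hV_def
  set W : ℝ → ℝ := fun t => ω * (-A * Real.sin (ω * t) + B * Real.cos (ω * t)) with hW_def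
  have hlin : ∀ t : ℝ, HasDerivAt (fun s : ℝ => ω * s) ω t := by
    intro t; simpa using (hasDerivAt_id t).const_mul ω
  have hVd : ∀ t : ℝ, HasDerivAt V (W t) t := by
    intro t
    have h1 := ((hasDerivAt_const t (1:ℝ)).add ((hlin t).cos.const_mul A)).add
      ((hlin t).sin.const_mul B)
    rw [hV_def, hW_def]
    refine h1.congr_deriv ?_
    ring
  have hWd : ∀ t : ℝ, HasDerivAt W (κ * (1 - V t)) t := by
    intro t
    have h1 := ((((hlin t).sin.const_mul (-A)).add ((hlin t).cos.const_mul B)).const_mul ω)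
    rw [hW_def, hV_def]
    refine h1.congr_deriv ?_
    rw [← hω2]
    ring
  have hV0 : V 0 = v 0 := by simp [hV_def, hA_def]
  have hW0 : W 0 = w 0 := by
    simp [hW_def, hB_def]
    field_simp
  -- uniqueness via energy
  have hveq : ∀ t ≥ (0:ℝ), v t = V t ∧ w t = W t := by
    intro t ht
    set u : ℝ → ℝ := fun s => v s - V s with hu_def
    set z : ℝ → ℝ := fun s => w s - W s with hz_def
    set F : ℝ → ℝ := fun s => z s ^ 2 + κ * u s ^ 2 with hF_def
    have hFd : ∀ s ≥ (0:ℝ), HasDerivAt F 0 s := by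
      intro s hs
      have hu : HasDerivAt u (z s) s := (hvd s hs).sub (hVd s)
      have hz : HasDerivAt z (κ * (1 - v s) - κ * (1 - V s)) s := (hwd s hs).sub (hWd s)
      have h1 := (hz.pow 2).add ((hu.pow 2).const_mul κ)
      rw [hF_def]
      refine h1.congr_deriv ?_
      simp only [hu_def, hz_def]
      push_cast
      ring
    have hFt := const_of F hFd t ht
    have hF0 : F 0 = 0 := by simp [hF_def, hz_def, hu_def, hV0, hW0]
    rw [hF0] at hFt
    simp only [hF_def] at hFt
    have hu0 : u t = 0 := by
      have h1 : u t ^ 2 = 0 := by nlinarith [sq_nonneg (z t), sq_nonneg (u t)]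
      exact pow_eq_zero_iff (n := 2) (by norm_num) |>.mp h1
    have hz0 : z t = 0 := by
      have h1 : z t ^ 2 = 0 := by nlinarith [sq_nonneg (z t), sq_nonneg (u t)]
      exact pow_eq_zero_iff (n := 2) (by norm_num) |>.mp h1
    simp only [hu_def, hz_def] at hu0 hz0
    exact ⟨sub_eq_zero.mp hu0, sub_eq_zero.mp hz0⟩
  -- relate A, B to initial data
  have hv0 : v 0 = (1 - ν₀)⁻¹ := by simp [hv_def, hν0]
  have hw0 : w 0 = q₀ * (1 - ν₀)⁻¹ := by simp [hw_def, hv_def, hν0, hq0]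
  have hB2 : B ^ 2 = q₀ ^ 2 / (κ * (1 - ν₀) ^ 2) := by
    rw [hB_def, hw0, div_pow, hω2, mul_pow]
    field_simp
    try ring
    try simp
  have hA_eq : A = ν₀ / (1 - ν₀) := by
    rw [hA_def, hv0]
    field_simp
    ring
  rcases lt_or_ge (A ^ 2 + B ^ 2) 1 with hgood | hbad
  · -- subcritical case: both sides hold
    set R := Real.sqrt (A ^ 2 + B ^ 2) with hR_def
    have hR0 : 0 ≤ R := Real.sqrt_nonneg _
    have hR2 : R ^ 2 = A ^ 2 + B ^ 2 := Real.sq_sqrt (by positivity)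
    have hR1 : R < 1 := by nlinarith
    have h1R : 0 < 1 - R := by linarith
    have bound1 : ∀ θ : ℝ, |A * Real.cos θ + B * Real.sin θ| ≤ R := by
      intro θ
      rw [abs_le]
      constructor <;>
        nlinarith [Real.sin_sq_add_cos_sq θ, sq_nonneg (A * Real.sin θ - B * Real.cos θ), hR2, hR0]
    have bound2 : ∀ θ : ℝ, |B * Real.cos θ - A * Real.sin θ| ≤ R := by
      intro θ
      rw [abs_le]
      constructor <;>
        nlinarith [Real.sin_sq_add_cos_sq θ, sq_nonneg (B * Real.sin θ + A * Real.cos θ), hR2, hR0]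
    refine iff_of_true ⟨ω / (1 - R) + (1 + 1 / (1 - R)), ?_⟩ ?_
    · intro t ht
      obtain ⟨hv_eq, hw_eq⟩ := hveq t ht
      have hb1 := abs_le.mp (bound1 (ω * t))
      have hvlb : 1 - R ≤ v t := by
        rw [hv_eq, hV_def]
        simp only
        linarith [hb1.1]
      have hWb : |W t| ≤ ω * R := by
        rw [hW_def]
        simp only
        rw [show ω * (-A * Real.sin (ω * t) + B * Real.cos (ω * t))
            = ω * (B * Real.cos (ω * t) - A * Real.sin (ω * t)) by ring]
        rw [abs_mul, abs_of_pos hω]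
        exact mul_le_mul_of_nonneg_left (bound2 (ω * t)) hω.le
      have hvpos' := hvpos t ht
      have hq_eq : q t = W t / v t := by
        rw [← hw_eq]
        simp only [hw_def]
        field_simp
      have hqb : |q t| ≤ ω / (1 - R) := by
        rw [hq_eq, abs_div, abs_of_pos hvpos']
        apply div_le_div₀ hω.le _ h1R hvlb
        nlinarith
      have hinv : (v t)⁻¹ = 1 - ν t := by simp [hv_def]
      have hinvpos : 0 < (v t)⁻¹ := inv_pos.mpr hvpos'
      have hinvle : (v t)⁻¹ ≤ 1 / (1 - R) := by
        rw [inv_eq_one_div]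
        exact one_div_le_one_div_of_le h1R hvlb
      have hνb : |ν t| ≤ 1 + 1 / (1 - R) := by
        have hν_eq : ν t = 1 - (v t)⁻¹ := by rw [hinv]; ring
        rw [hν_eq, abs_le]
        constructor <;> linarith
      have hpos1 : 0 ≤ ω / (1 - R) := by positivity
      have hpos2 : (0:ℝ) ≤ 1 + 1 / (1 - R) := by positivity
      exact ⟨by linarith, by linarith⟩
    · -- the threshold inequality
      have hkey : q₀ ^ 2 < κ * (1 - 2 * ν₀) := by
        rw [hA_eq] at hgood
        rw [hB2] at hgood
        have hmul : κ * (1 - ν₀) ^ 2 * ((ν₀ / (1 - ν₀)) ^ 2 + q₀ ^ 2 / (κ * (1 - ν₀) ^ 2))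
            < κ * (1 - ν₀) ^ 2 * 1 :=
          mul_lt_mul_of_pos_left hgood (by positivity)
        have hsimp : κ * (1 - ν₀) ^ 2 * ((ν₀ / (1 - ν₀)) ^ 2 + q₀ ^ 2 / (κ * (1 - ν₀) ^ 2))
            = κ * ν₀ ^ 2 + q₀ ^ 2 := by
          field_simp
        rw [hsimp] at hmul
        nlinarith
      rw [show |q₀| < Real.sqrt (κ * (1 - 2 * ν₀)) ↔ |q₀| ^ 2 < κ * (1 - 2 * ν₀) from
        Real.lt_sqrt (abs_nonneg q₀), sq_abs]
      exact hkey
  · -- supercritical case: contradiction with global existence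
    exfalso
    set R := Real.sqrt (A ^ 2 + B ^ 2) with hR_def
    have hR2 : R ^ 2 = A ^ 2 + B ^ 2 := Real.sq_sqrt (by positivity)
    have hR0 : 0 ≤ R := Real.sqrt_nonneg _
    have hR1 : 1 ≤ R := by nlinarith
    have hRpos : 0 < R := lt_of_lt_of_le one_pos hR1
    set zc : ℂ := ⟨A, B⟩ with hzc_def
    have hzabs : ‖zc‖ = R := by
      rw [Complex.norm_def, hzc_def, Complex.normSq_mk, hR_def]
      norm_num [pow_two]
    have hzne : zc ≠ 0 := by
      intro h
      rw [h] at hzabs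
      simp at hzabs
      nlinarith
    set θ := Complex.arg zc with hθ_def
    have hcos : Real.cos θ = A / R := by rw [hθ_def, Complex.cos_arg hzne, hzabs]
    have hsin : Real.sin θ = B / R := by rw [hθ_def, Complex.sin_arg, hzabs]
    have hθlb : -Real.pi < θ := Complex.neg_pi_lt_arg zc
    set t := (θ + Real.pi) / ω with ht_def
    have ht : 0 ≤ t := div_nonneg (by linarith) hω.le
    have hωt : ω * t = θ + Real.pi := by
      rw [ht_def]
      field_simp
    have hVt : V t = 1 - R := by
      rw [hV_def]
      simp only
      rw [hωt, Real.cos_add, Real.sin_add]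
      simp only [Real.cos_pi, Real.sin_pi]
      rw [hcos, hsin]
      field_simp
      nlinarith
    have hvt := hvpos t ht
    rw [(hveq t ht).1, hVt] at hvt
    linarith
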